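/- Let u : ℝ → ℝ be C¹ and 1-periodic with μ₀ = ∫₀¹ u dx and μ₁ = (∫₀¹ (u')² dx)^{1/2}. Then ‖u‖_{H¹}, defined as ‖u‖_{L²[0,1]} + ‖u'‖_{L²[0,1]}, is at most |μ₀| + (1 + √3/6) μ₁. -/

import Mathlib

open MeasureTheory intervalIntegral

lemma my_cs (f g : ℝ → ℝ)
    (hf2 : IntervalIntegrable (fun t => f t ^ 2) volume 0 1)
    (hg2 : IntervalIntegrable (fun t => g t ^ 2) volume 0 1)
    (hfg : IntervalIntegrable (fun t => f t * g t) volume 0 1) :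
    (∫ t in (0:ℝ)..1, f t * g t) ^ 2
      ≤ (∫ t in (0:ℝ)..1, f t ^ 2) * (∫ t in (0:ℝ)..1, g t ^ 2) := by
  set A := ∫ t in (0:ℝ)..1, f t ^ 2
  set B := ∫ t in (0:ℝ)..1, f t * g t
  set C := ∫ t in (0:ℝ)..1, g t ^ 2
  have key : ∀ x : ℝ, 0 ≤ A * (x * x) + (2 * B) * x + C := by
    intro x
    have e : ∀ t : ℝ, (x * f t + g t) ^ 2
        = x ^ 2 * f t ^ 2 + 2 * x * (f t * g t) + g t ^ 2 := by intro t; ring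
    have h0 : 0 ≤ ∫ t in (0:ℝ)..1, (x * f t + g t) ^ 2 :=
      intervalIntegral.integral_nonneg (by norm_num) (fun t _ => sq_nonneg _)
    have hexp : (∫ t in (0:ℝ)..1, (x * f t + g t) ^ 2)
        = x ^ 2 * A + 2 * x * B + C := by
      rw [intervalIntegral.integral_congr
        (g := fun t => x ^ 2 * f t ^ 2 + 2 * x * (f t * g t) + g t ^ 2) (fun t _ => e t)]
      rw [intervalIntegral.integral_add ((hf2.const_mul (x ^ 2)).add (hfg.const_mul (2 * x))) hg2,
        intervalIntegral.integral_add (hf2.const_mul (x ^ 2)) (hfg.const_mul (2 * x)),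
        intervalIntegral.integral_const_mul, intervalIntegral.integral_const_mul]
    nlinarith [h0, hexp]
  have := discrim_le_zero key
  unfold discrim at this
  nlinarith [this]

lemma ind_meas (x : ℝ) : Measurable (fun t : ℝ => if x ≤ t then (1:ℝ) else 0) := by
  have : MeasurableSet {t : ℝ | x ≤ t} := measurableSet_Ici
  exact Measurable.ite this measurable_const measurable_const

lemma ae_ne (x : ℝ) : ∀ᵐ t : ℝ, t ≠ x := by
  rw [MeasureTheory.ae_iff]
  simpa using measure_singleton x

lemma ind_mul_intInt (x a b : ℝ) (D : ℝ → ℝ) (hD : Continuous D) :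
    IntervalIntegrable (fun t => (if x ≤ t then (1:ℝ) else 0) * D t) volume a b := by
  apply (hD.intervalIntegrable a b).mono_fun
  · exact ((ind_meas x).mul hD.measurable).aestronglyMeasurable
  · filter_upwards with t
    by_cases h : x ≤ t <;> simp [h]

theorem H1_norm_bound_periodic
    (u : ℝ → ℝ) (hu : ContDiff ℝ 1 u) (hper : Function.Periodic u 1)
    (μ₀ μ₁ : ℝ) (hμ₀ : μ₀ = ∫ x in (0:ℝ)..1, u x)
    (hμ₁ : μ₁ = Real.sqrt (∫ x in (0:ℝ)..1, (deriv u x) ^ 2)) :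
    Real.sqrt (∫ x in (0:ℝ)..1, (u x) ^ 2)
      + Real.sqrt (∫ x in (0:ℝ)..1, (deriv u x) ^ 2)
      ≤ |μ₀| + (1 + Real.sqrt 3 / 6) * μ₁ := by
  set D := deriv u with hDdef
  have hDc : Continuous D := hu.continuous_deriv le_rfl
  have huc : Continuous u := hu.continuous
  have hdiff : ∀ x : ℝ, HasDerivAt u (D x) x := fun x =>
    ((hu.differentiable one_ne_zero) x).hasDerivAt
  have hu1 : u 1 = u 0 := by simpa using hper 0
  -- ∫ D = 0
  have hintD : ∀ a b : ℝ, (∫ t in a..b, D t) = u b - u a := by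
    intro a b
    exact intervalIntegral.integral_deriv_eq_sub
      (fun x _ => (hu.differentiable one_ne_zero) x) (hDc.intervalIntegrable a b)
  have hD0 : (∫ t in (0:ℝ)..1, D t) = 0 := by rw [hintD]; rw [hu1]; ring
  -- ∫ t * D t = u 1 - μ₀
  have htD : (∫ t in (0:ℝ)..1, t * D t) = u 1 - μ₀ := by
    have := intervalIntegral.integral_mul_deriv_eq_deriv_mul
      (u := fun t : ℝ => t) (u' := fun _ : ℝ => (1:ℝ)) (v := u) (v' := D)
      (fun x _ => hasDerivAt_id x) (fun x _ => hdiff x)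
      (intervalIntegrable_const) (hDc.intervalIntegrable 0 1)
    rw [this, hμ₀]
    simp
  -- kernel
  set g : ℝ → ℝ → ℝ := fun x t => t + 1/2 - x - (if x ≤ t then 1 else 0) with hgdef
  have hg_int : ∀ x : ℝ, ∀ a b : ℝ, IntervalIntegrable (fun t => g x t * D t) volume a b := by
    intro x a b
    have h1 : IntervalIntegrable (fun t => (t + 1/2 - x) * D t) volume a b :=
      (((continuous_id.add continuous_const).sub continuous_const).mul hDc).intervalIntegrable a b
    have h2 := ind_mul_intInt x a b D hDc
    have := h1.sub h2
    apply this.congr_ae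
    filter_upwards with t
    simp only [hgdef]; ring
  -- indicator integral
  have hind : ∀ x ∈ Set.Icc (0:ℝ) 1,
      (∫ t in (0:ℝ)..1, (if x ≤ t then (1:ℝ) else 0) * D t) = u 1 - u x := by
    intro x hx
    have hsplit := intervalIntegral.integral_add_adjacent_intervals
      (ind_mul_intInt x 0 x D hDc) (ind_mul_intInt x x 1 D hDc)
    have h1 : (∫ t in (0:ℝ)..x, (if x ≤ t then (1:ℝ) else 0) * D t) = 0 := by
      have h0 : (∫ t in (0:ℝ)..x, (if x ≤ t then (1:ℝ) else 0) * D t)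
          = ∫ t in (0:ℝ)..x, (0:ℝ) := by
        apply intervalIntegral.integral_congr_ae
        filter_upwards [ae_ne x] with t ht htmem
        have htm : t ∈ Set.Ioc (0:ℝ) x := by
          rwa [Set.uIoc_of_le hx.1] at htmem
        have : ¬ (x ≤ t) := fun h => ht (le_antisymm htm.2 h)
        simp [this]
      simpa using h0
    have h2 : (∫ t in x..(1:ℝ), (if x ≤ t then (1:ℝ) else 0) * D t)
        = ∫ t in x..(1:ℝ), D t := by
      apply intervalIntegral.integral_congr_ae
      filter_upwards with t htmem
      have : t ∈ Set.Ioc x (1:ℝ) := by rwa [Set.uIoc_of_le hx.2] at htmem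
      simp [le_of_lt this.1]
    rw [← hsplit, h1, h2, hintD]
    ring
  -- key identity
  have hkey : ∀ x ∈ Set.Icc (0:ℝ) 1,
      (∫ t in (0:ℝ)..1, g x t * D t) = u x - μ₀ := by
    intro x hx
    have e : ∀ t : ℝ, g x t * D t
        = t * D t + (1/2 - x) * D t - (if x ≤ t then 1 else 0) * D t := by
      intro t; simp only [hgdef]; ring
    rw [intervalIntegral.integral_congr (g := fun t =>
      t * D t + (1/2 - x) * D t - (if x ≤ t then 1 else 0) * D t) (fun t _ => e t)]
    have i1 : IntervalIntegrable (fun t => t * D t) volume 0 1 :=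
      (continuous_id.mul hDc).intervalIntegrable 0 1
    have i2 : IntervalIntegrable (fun t => (1/2 - x) * D t) volume 0 1 :=
      (hDc.intervalIntegrable 0 1).const_mul _
    rw [intervalIntegral.integral_sub (i1.add i2) (ind_mul_intInt x 0 1 D hDc),
      intervalIntegral.integral_add i1 i2, intervalIntegral.integral_const_mul,
      htD, hD0, hind x hx]
    ring
  -- integrability of g²
  have hgi : ∀ x a b : ℝ, IntervalIntegrable (fun t => (g x t) ^ 2) volume a b := by
      intro x a b
      have h1 : IntervalIntegrable (fun t => ((t + 1/2 - x) - (if x ≤ t then (1:ℝ) else 0)) ^ 2) volume a b := by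
        have hc : Continuous (fun t : ℝ => t + 1/2 - x) :=
          (continuous_id.add continuous_const).sub continuous_const
        have e : ∀ t : ℝ, ((t + 1/2 - x) - (if x ≤ t then (1:ℝ) else 0)) ^ 2
            = (t + 1/2 - x) ^ 2 - 2 * ((if x ≤ t then (1:ℝ) else 0) * (t + 1/2 - x))
              + (if x ≤ t then (1:ℝ) else 0) * 1 := by
          intro t; by_cases h : x ≤ t <;> simp [h] <;> ring
        have i1 : IntervalIntegrable (fun t : ℝ => (t + 1/2 - x) ^ 2) volume a b :=
          ((hc.pow 2).intervalIntegrable a b)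
        have i2 := ind_mul_intInt x a b _ hc
        have i3 := ind_mul_intInt x a b (fun _ => (1:ℝ)) continuous_const
        have := (i1.sub (i2.const_mul 2)).add i3
        exact this.congr_ae (by filter_upwards with t using (e t).symm)
      exact h1.congr_ae (by filter_upwards with t; simp only [hgdef])
  -- ∫ g² = 1/12
  have hg2 : ∀ x ∈ Set.Icc (0:ℝ) 1, (∫ t in (0:ℝ)..1, (g x t) ^ 2) = 1/12 := by
    intro x hx
    have hsplit := intervalIntegral.integral_add_adjacent_intervals (hgi x 0 x) (hgi x x 1)
    have h1 : (∫ t in (0:ℝ)..x, (g x t) ^ 2) = ∫ t in (0:ℝ)..x, (t + 1/2 - x) ^ 2 := by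
      apply intervalIntegral.integral_congr_ae
      filter_upwards [ae_ne x] with t ht htmem
      have htm : t ∈ Set.Ioc (0:ℝ) x := by rwa [Set.uIoc_of_le hx.1] at htmem
      have : ¬ (x ≤ t) := fun h => ht (le_antisymm htm.2 h)
      simp [hgdef, this]
    have h2 : (∫ t in x..(1:ℝ), (g x t) ^ 2) = ∫ t in x..(1:ℝ), (t - 1/2 - x) ^ 2 := by
      apply intervalIntegral.integral_congr_ae
      filter_upwards with t htmem
      have htm : t ∈ Set.Ioc x (1:ℝ) := by rwa [Set.uIoc_of_le hx.2] at htmem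
      have : x ≤ t := le_of_lt htm.1
      simp only [hgdef, if_pos this]
      ring
    have c1 : (∫ t in (0:ℝ)..x, (t + 1/2 - x) ^ 2)
        = x^3/3 + (1/2 - x) * x^2 + (1/2 - x)^2 * x := by
      have e : ∀ t : ℝ, (t + 1/2 - x) ^ 2
          = t^2 + (2 * (1/2 - x)) * t + (1/2 - x)^2 := by intro t; ring
      rw [intervalIntegral.integral_congr (g := fun t =>
        t^2 + (2 * (1/2 - x)) * t + (1/2 - x)^2) (fun t _ => e t)]
      rw [intervalIntegral.integral_add
          ((((continuous_pow 2).intervalIntegrable 0 x).add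
            ((continuous_const.mul continuous_id').intervalIntegrable 0 x)) : IntervalIntegrable (fun t : ℝ => t^2 + (2 * (1/2 - x)) * t) MeasureTheory.volume 0 x)
          (intervalIntegrable_const),
        intervalIntegral.integral_add (f := fun t : ℝ => t^2) (g := fun t : ℝ => (2 * (1/2 - x)) * t) ((continuous_pow 2).intervalIntegrable 0 x)
          ((continuous_const.mul continuous_id').intervalIntegrable 0 x : IntervalIntegrable (fun t : ℝ => (2 * (1/2 - x)) * t) MeasureTheory.volume 0 x),
        intervalIntegral.integral_const_mul, integral_pow, integral_id,
        intervalIntegral.integral_const]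
      simp only [smul_eq_mul]; ring
    have c2 : (∫ t in x..(1:ℝ), (t - 1/2 - x) ^ 2)
        = (1^3 - x^3)/3 + (-(1/2) - x) * (1^2 - x^2) + (-(1/2) - x)^2 * (1 - x) := by
      have e : ∀ t : ℝ, (t - 1/2 - x) ^ 2
          = t^2 + (2 * (-(1/2) - x)) * t + (-(1/2) - x)^2 := by intro t; ring
      rw [intervalIntegral.integral_congr (g := fun t =>
        t^2 + (2 * (-(1/2) - x)) * t + (-(1/2) - x)^2) (fun t _ => e t)]
      rw [intervalIntegral.integral_add
          ((((continuous_pow 2).intervalIntegrable x 1).add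
            ((continuous_const.mul continuous_id').intervalIntegrable x 1)) : IntervalIntegrable (fun t : ℝ => t^2 + (2 * (-(1/2) - x)) * t) MeasureTheory.volume x 1)
          (intervalIntegrable_const),
        intervalIntegral.integral_add (f := fun t : ℝ => t^2) (g := fun t : ℝ => (2 * (-(1/2) - x)) * t) ((continuous_pow 2).intervalIntegrable x 1)
          ((continuous_const.mul continuous_id').intervalIntegrable x 1 : IntervalIntegrable (fun t : ℝ => (2 * (-(1/2) - x)) * t) MeasureTheory.volume x 1),
        intervalIntegral.integral_const_mul, integral_pow, integral_id,
        intervalIntegral.integral_const]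
      simp only [smul_eq_mul]; push_cast; ring
    rw [← hsplit, h1, h2, c1, c2]
    ring
  -- pointwise bound
  set M := ∫ t in (0:ℝ)..1, D t ^ 2 with hMdef
  have hM0 : 0 ≤ M :=
    intervalIntegral.integral_nonneg (by norm_num) (fun t _ => sq_nonneg _)
  have hpt : ∀ x ∈ Set.Icc (0:ℝ) 1, (u x - μ₀) ^ 2 ≤ 1/12 * M := by
    intro x hx
    have hcs := my_cs (g x) D (hgi x 0 1)
      ((hDc.pow 2).intervalIntegrable 0 1) (hg_int x 0 1)
    rw [hkey x hx, hg2 x hx] at hcs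
    exact hcs
  -- integrate
  have hvint : (∫ x in (0:ℝ)..1, (u x - μ₀) ^ 2) ≤ 1/12 * M := by
    have := intervalIntegral.integral_mono_on (by norm_num : (0:ℝ) ≤ 1)
      (((huc.sub continuous_const).pow 2).intervalIntegrable 0 1)
      (_root_.intervalIntegrable_const (μ := volume) (c := 1/12 * M)) hpt
    simpa using this
  -- ∫ u² = ∫ (u-μ₀)² + μ₀²
  have hexp : (∫ x in (0:ℝ)..1, (u x) ^ 2)
      = (∫ x in (0:ℝ)..1, (u x - μ₀) ^ 2) + μ₀ ^ 2 := by
    have e : ∀ t : ℝ, (u t - μ₀) ^ 2 = u t ^ 2 - (2 * μ₀) * u t + μ₀ ^ 2 := by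
      intro t; ring
    rw [intervalIntegral.integral_congr (g := fun t =>
      u t ^ 2 - (2 * μ₀) * u t + μ₀ ^ 2) (fun t _ => e t)]
    rw [intervalIntegral.integral_add (f := fun t => u t ^ 2 - (2 * μ₀) * u t)
        (((huc.pow 2).intervalIntegrable 0 1).sub
          ((huc.intervalIntegrable 0 1).const_mul _)) intervalIntegrable_const,
      intervalIntegral.integral_sub (f := fun t => u t ^ 2) ((huc.pow 2).intervalIntegrable 0 1)
        ((huc.intervalIntegrable 0 1).const_mul _),
      intervalIntegral.integral_const_mul, intervalIntegral.integral_const, ← hμ₀]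
    simp; ring
  -- final
  have hμ₁nn : 0 ≤ μ₁ := hμ₁ ▸ Real.sqrt_nonneg _
  have hμ₁sq : μ₁ ^ 2 = M := by rw [hμ₁, Real.sq_sqrt hM0]
  have hfinal : Real.sqrt (∫ x in (0:ℝ)..1, (u x) ^ 2) ≤ |μ₀| + Real.sqrt 3 / 6 * μ₁ := by
    have h1 : (∫ x in (0:ℝ)..1, (u x) ^ 2) ≤ (|μ₀| + Real.sqrt 3 / 6 * μ₁) ^ 2 := by
      have h3 : Real.sqrt 3 ^ 2 = 3 := Real.sq_sqrt (by norm_num)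
      rw [hexp]
      nlinarith [hvint, abs_nonneg μ₀, Real.sqrt_nonneg 3, sq_abs μ₀,
        mul_nonneg (div_nonneg (Real.sqrt_nonneg 3) (by norm_num : (0:ℝ) ≤ 6)) hμ₁nn]
    calc Real.sqrt (∫ x in (0:ℝ)..1, (u x) ^ 2)
        ≤ Real.sqrt ((|μ₀| + Real.sqrt 3 / 6 * μ₁) ^ 2) := Real.sqrt_le_sqrt h1
      _ = |μ₀| + Real.sqrt 3 / 6 * μ₁ := by
          rw [Real.sqrt_sq (by positivity)]
  have : Real.sqrt (∫ x in (0:ℝ)..1, D x ^ 2) = μ₁ := hμ₁.symm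
  rw [this]
  linarith [hfinal]
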